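/- For k ≥ 1 and 1 ≤ s ≤ k, the number of binary words x of length 2k with |Z(x)| = s equals 2·C(2k, k-s). -/

import Mathlib

/-- Number of 0's (`false`) at odd positions (1-based) of a binary word. -/
def oddZeros (x : List Bool) : ℕ :=
  ((x.zipIdx.map Prod.swap).filter (fun p => p.1 % 2 = 0 && p.2 == false)).length

/-- Number of 0's (`false`) at even positions (1-based) of a binary word. -/
def evenZeros (x : List Bool) : ℕ :=
  ((x.zipIdx.map Prod.swap).filter (fun p => p.1 % 2 = 1 && p.2 == false)).length

/-- Z(x) = odd(x) - even(x). -/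
def Zw (x : List Bool) : ℤ := (oddZeros x : ℤ) - (evenZeros x : ℤ)

open Finset

lemma enum_ofFn {n : ℕ} (x : Fin n → Bool) :
    (List.ofFn x).zipIdx.map Prod.swap = List.ofFn (fun i : Fin n => (i.val, x i)) := by
  apply List.ext_getElem
  · simp
  · intro i h1 h2
    simp [List.getElem_zipIdx]

lemma filter_ofFn_length {n : ℕ} {α : Type*} (f : Fin n → α) (p : α → Bool) :
    ((List.ofFn f).filter p).length =
      (Finset.univ.filter (fun i : Fin n => p (f i) = true)).card := by
  rw [List.ofFn_eq_map, List.filter_map, List.length_map, ← List.countP_eq_length_filter]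
  rw [Fin.univ_def, Finset.filter, Finset.card]
  simp [Multiset.countP_eq_card_filter, Function.comp]
  rw [List.countP_eq_length_filter]; rfl

lemma oddZeros_ofFn {n : ℕ} (x : Fin n → Bool) :
    oddZeros (List.ofFn x) =
      (Finset.univ.filter (fun i : Fin n => i.val % 2 = 0 ∧ x i = false)).card := by
  rw [oddZeros, enum_ofFn, filter_ofFn_length]
  congr 1; ext i; simp

lemma evenZeros_ofFn {n : ℕ} (x : Fin n → Bool) :
    evenZeros (List.ofFn x) =
      (Finset.univ.filter (fun i : Fin n => i.val % 2 = 1 ∧ x i = false)).card := by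
  rw [evenZeros, enum_ofFn, filter_ofFn_length]
  congr 1; ext i; simp

/-- number of falses -/
def Fz {n : ℕ} (u : Fin n → Bool) : ℕ := (Finset.univ.filter fun i => u i = false).card

lemma Fz_le {n : ℕ} (u : Fin n → Bool) : Fz u ≤ n := by
  calc Fz u ≤ (Finset.univ : Finset (Fin n)).card := Finset.card_filter_le _ _
  _ = n := by simp

lemma Fz_card {n a : ℕ} :
    (Finset.univ.filter fun u : Fin n → Bool => Fz u = a).card = n.choose a := by
  rw [show n.choose a = (Finset.univ.powersetCard a : Finset (Finset (Fin n))).card by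
    simp [Finset.card_powersetCard]]
  refine Finset.card_bij' (fun u _ => Finset.univ.filter fun i => u i = false)
    (fun S _ => fun i => decide (i ∉ S)) ?_ ?_ ?_ ?_
  · intro u hu
    simp only [Finset.mem_coe, Finset.mem_filter, Finset.mem_univ, true_and] at hu
    rw [Finset.mem_powersetCard]; exact ⟨Finset.subset_univ _, hu⟩
  · intro S hS
    simp only [Finset.mem_powersetCard] at hS
    simp only [Finset.mem_filter, Finset.mem_univ, true_and, Fz, ← hS.2]
    congr 1
    ext i
    simp
  · intro u hu
    funext i
    by_cases h : u i = false <;> simp [h]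
  · intro S hS
    ext i
    simp

def d0 (k : ℕ) (j : Fin k) : Fin (2 * k) := ⟨2 * j.val, by have := j.isLt; omega⟩
def d1 (k : ℕ) (j : Fin k) : Fin (2 * k) := ⟨2 * j.val + 1, by have := j.isLt; omega⟩

lemma odd_card {k : ℕ} (x : Fin (2 * k) → Bool) :
    (Finset.univ.filter fun i : Fin (2 * k) => i.val % 2 = 0 ∧ x i = false).card
      = Fz (fun j : Fin k => x (d0 k j)) := by
  rw [Fz]
  refine Finset.card_bij' (fun i hi => (⟨i.val / 2, by have := i.isLt; omega⟩ : Fin k))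
    (fun j _ => d0 k j) ?_ ?_ ?_ ?_
  · intro i hi
    simp only [Finset.mem_filter, Finset.mem_univ, true_and] at hi ⊢
    have : d0 k ⟨i.val / 2, by have := i.isLt; omega⟩ = i := by
      apply Fin.ext; simp only [d0]; omega
    rw [this]; exact hi.2
  · intro j hj
    simp only [Finset.mem_filter, Finset.mem_univ, true_and] at hj ⊢
    exact ⟨by simp only [d0]; omega, hj⟩
  · intro i hi
    simp only [Finset.mem_filter, Finset.mem_univ, true_and] at hi
    apply Fin.ext; simp only [d0]; omega
  · intro j hj
    apply Fin.ext; simp only [d0]; omega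

lemma even_card {k : ℕ} (x : Fin (2 * k) → Bool) :
    (Finset.univ.filter fun i : Fin (2 * k) => i.val % 2 = 1 ∧ x i = false).card
      = Fz (fun j : Fin k => x (d1 k j)) := by
  rw [Fz]
  refine Finset.card_bij' (fun i hi => (⟨i.val / 2, by have := i.isLt; omega⟩ : Fin k))
    (fun j _ => d1 k j) ?_ ?_ ?_ ?_
  · intro i hi
    simp only [Finset.mem_filter, Finset.mem_univ, true_and] at hi ⊢
    have : d1 k ⟨i.val / 2, by have := i.isLt; omega⟩ = i := by
      apply Fin.ext; simp only [d1]; omega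
    rw [this]; exact hi.2
  · intro j hj
    simp only [Finset.mem_filter, Finset.mem_univ, true_and] at hj ⊢
    exact ⟨by simp only [d1]; omega, hj⟩
  · intro i hi
    simp only [Finset.mem_filter, Finset.mem_univ, true_and] at hi
    apply Fin.ext; simp only [d1]; omega
  · intro j hj
    apply Fin.ext; simp only [d1]; omega

lemma Zw_eq {k : ℕ} (x : Fin (2 * k) → Bool) :
    Zw (List.ofFn x) =
      (Fz (fun j : Fin k => x (d0 k j)) : ℤ) - (Fz (fun j : Fin k => x (d1 k j)) : ℤ) := by
  rw [Zw, oddZeros_ofFn, evenZeros_ofFn, odd_card, even_card]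

lemma pair_count {k : ℕ} (a b : ℕ) :
    (Finset.univ.filter fun p : (Fin k → Bool) × (Fin k → Bool) =>
      Fz p.1 = a ∧ Fz p.2 = b).card = k.choose a * k.choose b := by
  rw [← Finset.univ_product_univ,
    Finset.filter_product (fun u : Fin k → Bool => Fz u = a) (fun v : Fin k → Bool => Fz v = b),
    Finset.card_product, Fz_card, Fz_card]

lemma count_shift {k s : ℕ} (hsk : s ≤ k) :
    (Finset.univ.filter fun p : (Fin k → Bool) × (Fin k → Bool) =>
      Fz p.1 = Fz p.2 + s).card = (2 * k).choose (k - s) := by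
  classical
  set T := ((Finset.range (k+1)) ×ˢ Finset.range (k+1)).filter
    (fun q : ℕ × ℕ => q.1 = q.2 + s) with hT
  rw [Finset.card_eq_sum_card_fiberwise (f := fun p => (Fz p.1, Fz p.2)) (t := T)
    (by
      intro p hp
      simp only [Finset.mem_coe, Finset.mem_filter, Finset.mem_univ, true_and] at hp
      simp only [Finset.mem_coe, hT, Finset.mem_filter, Finset.mem_product, Finset.mem_range]
      exact ⟨⟨Nat.lt_succ_of_le (Fz_le _), Nat.lt_succ_of_le (Fz_le _)⟩, hp⟩)]
  have step : ∀ q ∈ T,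
      ((Finset.univ.filter fun p : (Fin k → Bool) × (Fin k → Bool) =>
        Fz p.1 = Fz p.2 + s).filter fun p => (Fz p.1, Fz p.2) = q).card
      = k.choose q.1 * k.choose q.2 := by
    intro q hq
    have hq1 : q.1 = q.2 + s := (Finset.mem_filter.1 hq).2
    have : ((Finset.univ.filter fun p : (Fin k → Bool) × (Fin k → Bool) =>
        Fz p.1 = Fz p.2 + s).filter fun p => (Fz p.1, Fz p.2) = q)
        = Finset.univ.filter fun p => Fz p.1 = q.1 ∧ Fz p.2 = q.2 := by
      obtain ⟨q1, q2⟩ := q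
      simp only [Prod.mk.injEq] at hq1 ⊢
      ext p
      simp only [Finset.mem_filter, Finset.mem_univ, true_and, Prod.mk.injEq]
      omega
    rw [this, pair_count]
  rw [Finset.sum_congr rfl step, two_mul, Nat.add_choose_eq]
  refine Finset.sum_nbij' (i := fun q : ℕ × ℕ => (k - q.1, q.2))
    (j := fun ij : ℕ × ℕ => (ij.2 + s, ij.2)) ?_ ?_ ?_ ?_ ?_
  · intro q hq
    simp only [hT, Finset.mem_filter, Finset.mem_product, Finset.mem_range] at hq
    simp only [Finset.HasAntidiagonal.mem_antidiagonal]
    omega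
  · intro ij hij
    rw [Finset.HasAntidiagonal.mem_antidiagonal] at hij
    simp only [hT, Finset.mem_filter, Finset.mem_product, Finset.mem_range, and_true, true_and,
      eq_self_iff_true]
    omega
  · intro q hq
    simp only [hT, Finset.mem_filter, Finset.mem_product, Finset.mem_range] at hq
    obtain ⟨a, b⟩ := q
    simp only [Prod.mk.injEq, and_true, true_and, eq_self_iff_true]
    omega
  · intro ij hij
    rw [Finset.HasAntidiagonal.mem_antidiagonal] at hij
    obtain ⟨a, b⟩ := ij
    simp only [Prod.mk.injEq, and_true, true_and, eq_self_iff_true]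
    omega
  · intro q hq
    simp only [hT, Finset.mem_filter, Finset.mem_product, Finset.mem_range] at hq
    have h1 : q.1 ≤ k := by omega
    rw [Nat.choose_symm h1]

lemma count_swap {k s : ℕ} :
    (Finset.univ.filter fun p : (Fin k → Bool) × (Fin k → Bool) =>
      Fz p.2 = Fz p.1 + s).card =
    (Finset.univ.filter fun p : (Fin k → Bool) × (Fin k → Bool) =>
      Fz p.1 = Fz p.2 + s).card := by
  refine Finset.card_nbij' Prod.swap Prod.swap ?_ ?_ ?_ ?_ <;>
    intro p hp <;> simp_all [Finset.mem_filter]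

theorem card_absZ_eq_s_even_length (k s : ℕ) (hk : 1 ≤ k) (hs1 : 1 ≤ s) (hsk : s ≤ k) :
    (Finset.univ.filter (fun x : Fin (2 * k) → Bool => |Zw (List.ofFn x)| = (s : ℤ))).card =
      2 * Nat.choose (2 * k) (k - s) := by
  classical
  have hmain : (Finset.univ.filter
        (fun x : Fin (2 * k) → Bool => |Zw (List.ofFn x)| = (s : ℤ))).card
      = (Finset.univ.filter (fun p : (Fin k → Bool) × (Fin k → Bool) =>
          |(Fz p.1 : ℤ) - (Fz p.2 : ℤ)| = (s : ℤ))).card := by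
    refine Finset.card_nbij'
      (i := fun x => (fun j => x (d0 k j), fun j => x (d1 k j)))
      (j := fun p i => if i.val % 2 = 0 then p.1 ⟨i.val / 2, by have := i.isLt; omega⟩
        else p.2 ⟨i.val / 2, by have := i.isLt; omega⟩) ?_ ?_ ?_ ?_
    · intro x hx
      simp only [Finset.mem_coe, Finset.mem_filter, Finset.mem_univ, true_and] at hx ⊢
      rw [Zw_eq] at hx
      exact hx
    · intro p hp
      simp only [Finset.mem_coe, Finset.mem_filter, Finset.mem_univ, true_and] at hp ⊢
      rw [Zw_eq]
      have h1 : (fun j : Fin k =>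
          (if (d0 k j).val % 2 = 0 then p.1 ⟨(d0 k j).val / 2, by have := (d0 k j).isLt; omega⟩
            else p.2 ⟨(d0 k j).val / 2, by have := (d0 k j).isLt; omega⟩)) = p.1 := by
        funext j
        rw [if_pos (by simp only [d0]; omega)]
        apply congrArg
        apply Fin.ext
        simp only [d0]
        omega
      have h2 : (fun j : Fin k =>
          (if (d1 k j).val % 2 = 0 then p.1 ⟨(d1 k j).val / 2, by have := (d1 k j).isLt; omega⟩
            else p.2 ⟨(d1 k j).val / 2, by have := (d1 k j).isLt; omega⟩)) = p.2 := by
        funext j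
        rw [if_neg (by simp only [d1]; omega)]
        apply congrArg
        apply Fin.ext
        simp only [d1]
        omega
      rw [h1, h2]
      exact hp
    · intro x hx
      funext i
      dsimp only
      by_cases h : i.val % 2 = 0
      · rw [if_pos h]
        apply congrArg
        apply Fin.ext
        simp only [d0]
        omega
      · rw [if_neg h]
        apply congrArg
        apply Fin.ext
        simp only [d1]
        omega
    · intro p hp
      apply Prod.ext
      · funext j
        dsimp only
        rw [if_pos (by simp only [d0]; omega)]
        apply congrArg
        apply Fin.ext
        simp only [d0]
        omega
      · funext j
        dsimp only
        rw [if_neg (by simp only [d1]; omega)]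
        apply congrArg
        apply Fin.ext
        simp only [d1]
        omega
  rw [hmain]
  have split : (Finset.univ.filter (fun p : (Fin k → Bool) × (Fin k → Bool) =>
        |(Fz p.1 : ℤ) - (Fz p.2 : ℤ)| = (s : ℤ)))
      = (Finset.univ.filter fun p : (Fin k → Bool) × (Fin k → Bool) =>
          Fz p.1 = Fz p.2 + s)
        ∪ (Finset.univ.filter fun p : (Fin k → Bool) × (Fin k → Bool) =>
          Fz p.2 = Fz p.1 + s) := by
    rw [← Finset.filter_or]
    apply Finset.filter_congr
    intro p _
    rw [abs_eq (by positivity : (0:ℤ) ≤ (s:ℤ))]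
    constructor <;> intro h <;> omega
  have hdisj : Disjoint
      (Finset.univ.filter fun p : (Fin k → Bool) × (Fin k → Bool) => Fz p.1 = Fz p.2 + s)
      (Finset.univ.filter fun p : (Fin k → Bool) × (Fin k → Bool) => Fz p.2 = Fz p.1 + s) := by
    rw [Finset.disjoint_left]
    intro p hp1 hp2
    simp only [Finset.mem_filter, Finset.mem_univ, true_and] at hp1 hp2
    omega
  rw [split, Finset.card_union_of_disjoint hdisj, count_shift hsk, count_swap, count_shift hsk]
  omega
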